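/- Let G be a graph and let T ⊆ Ê(G) be a discrete subspace of Ê(G). In the line graph G′ of G, let T′ = Φ(T ∩ Ω_E(G)) ∪ ⋃_{v ∈ T ∩ V(G)} K_v, where K_v = δ({v}) ⊆ E(G) = V(G′) is the set of edges of G incident with v, viewed as vertices of G′, and Φ([r]_E) = [φ(r)]. Then T′ is a discrete subspace of V̂(G′). -/

import Mathlib

/-!
Formalization of definitions and a statement from
"Edge-connectivity and edge-ends in infinite graphs" (arXiv:2404.17106).
-/

universe u

namespace EdgeEndPaper

variable {V : Type u}

/-- A ray in `G`: a one-way infinite path `v₀v₁v₂…`. -/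
structure Ray (G : SimpleGraph V) : Type u where
  f : ℕ → V
  inj : Function.Injective f
  adj : ∀ n : ℕ, G.Adj (f n) (f (n + 1))

/-- A double ray in `G`: a two-way infinite path. -/
structure DoubleRay (G : SimpleGraph V) : Type u where
  f : ℤ → V
  inj : Function.Injective f
  adj : ∀ n : ℤ, G.Adj (f n) (f (n + 1))

variable (G : SimpleGraph V)

/-- The tails of the rays `r` and `s` lie in the same connected component of `G - F`
(deletion of the edges in `F`). -/
def SameComp (F : Set (Sym2 V)) (r s : Ray G) : Prop :=
  ∃ N : ℕ, ∀ m n : ℕ, N ≤ m → N ≤ n → (G.deleteEdges F).Reachable (r.f m) (s.f n)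

/-- Edge-equivalence of rays: no finite edge set separates the tails of `r` and `s`. -/
def EdgeEquiv (r s : Ray G) : Prop :=
  ∀ F : Set (Sym2 V), F.Finite → SameComp G F r s

/-- The edge-end space `Ω_E(G)`. -/
def EdgeEnd : Type u := Quot (EdgeEquiv G)

/-- The edge-end `[r]_E` of a ray `r`. -/
def Ray.edgeEnd {G : SimpleGraph V} (r : Ray G) : EdgeEnd G := Quot.mk _ r

/-- `C_E(F, ω)` : the vertices of the connected component of `G - F` in which `ω` has a tail. -/
def CE (F : Set (Sym2 V)) (ω : EdgeEnd G) : Set V :=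
  {v | ∃ r : Ray G, r.edgeEnd = ω ∧ ∃ N : ℕ, ∀ n : ℕ, N ≤ n →
    (G.deleteEdges F).Reachable (r.f n) v}

/-- `Ω_E(F, ω)` : the edge-ends whose rays have tails in the same component of `G - F`
as the rays of `ω`. -/
def OmegaE (F : Set (Sym2 V)) (ω : EdgeEnd G) : Set (EdgeEnd G) :=
  {η | ∃ r s : Ray G, r.edgeEnd = ω ∧ s.edgeEnd = η ∧ SameComp G F r s}

/-- The topology on `Ω_E(G)`, with the sets `Ω_E(F, ω)` (for finite `F ⊆ E(G)`) as a basis. -/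
def edgeEndTopology : TopologicalSpace (EdgeEnd G) :=
  .generateFrom {U | ∃ (F : Set (Sym2 V)) (ω : EdgeEnd G),
    F.Finite ∧ F ⊆ G.edgeSet ∧ U = OmegaE G F ω}

/-- `Ê(F, ω) = C_E(F, ω) ∪ Ω_E(F, ω)`, inside `Ê(G) = V(G) ⊔ Ω_E(G)`. -/
def EHatBasic (F : Set (Sym2 V)) (ω : EdgeEnd G) : Set (V ⊕ EdgeEnd G) :=
  Sum.inl '' CE G F ω ∪ Sum.inr '' OmegaE G F ω

/-- The topology on `Ê(G) = V(G) ∪ Ω_E(G)`: the vertex singletons together with the sets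
`Ê(F, ω)` (for finite `F ⊆ E(G)`) form a basis. -/
def eHatTopology : TopologicalSpace (V ⊕ EdgeEnd G) :=
  .generateFrom ({U | ∃ v : V, U = {Sum.inl v}} ∪
    {U | ∃ (F : Set (Sym2 V)) (ω : EdgeEnd G),
      F.Finite ∧ F ⊆ G.edgeSet ∧ U = EHatBasic G F ω})

/-- A vertex `v` edge-dominates the edge-end `ω` if `v ∈ C_E(F, ω)` for every finite `F`. -/
def EdgeDominates (v : V) (ω : EdgeEnd G) : Prop :=
  ∀ F : Set (Sym2 V), F.Finite → v ∈ CE G F ω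

/-- The cut `δ(X)`: the edges of `G` with one endpoint in `X` and the other outside of `X`. -/
def cut (X : Set V) : Set (Sym2 V) :=
  {e | e ∈ G.edgeSet ∧ ∃ u v : V, e = s(u, v) ∧ u ∈ X ∧ v ∉ X}

/-- `u` and `v` are connected in `G` by a walk avoiding the vertex set `S`. -/
def ReachAvoid (S : Set V) (u v : V) : Prop :=
  ∃ p : G.Walk u v, ∀ w ∈ p.support, w ∉ S

/-- The tails of `r` and `s` lie in the same component of `G - S` (vertex deletion). -/
def VSameComp (S : Set V) (r s : Ray G) : Prop :=
  ∃ N : ℕ, ∀ m n : ℕ, N ≤ m → N ≤ n → ReachAvoid G S (r.f m) (s.f n)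

/-- Equivalence of rays: no finite vertex set separates the tails of `r` and `s`. -/
def VEquiv (r s : Ray G) : Prop :=
  ∀ S : Set V, S.Finite → VSameComp G S r s

/-- The end space `Ω(G)`. -/
def VEnd : Type u := Quot (VEquiv G)

/-- The end `[r]` of a ray `r`. -/
def Ray.vEnd {G : SimpleGraph V} (r : Ray G) : VEnd G := Quot.mk _ r

/-- `C(S, ω)` : the vertices of the component of `G - S` in which `ω` has a tail. -/
def CV (S : Set V) (ω : VEnd G) : Set V :=
  {v | ∃ r : Ray G, r.vEnd = ω ∧ ∃ N : ℕ, ∀ n : ℕ, N ≤ n → ReachAvoid G S (r.f n) v}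

/-- `Ω(S, ω)` : the ends whose rays have tails in the same component of `G - S` as `ω`. -/
def OmegaV (S : Set V) (ω : VEnd G) : Set (VEnd G) :=
  {η | ∃ r s : Ray G, r.vEnd = ω ∧ s.vEnd = η ∧ VSameComp G S r s}

/-- `V̂(S, ω) = C(S, ω) ∪ Ω(S, ω)`. -/
def VHatBasic (S : Set V) (ω : VEnd G) : Set (V ⊕ VEnd G) :=
  Sum.inl '' CV G S ω ∪ Sum.inr '' OmegaV G S ω

/-- The topology on `V̂(G) = V(G) ∪ Ω(G)`: the finite vertex sets and the sets `V̂(S, ω)`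
form a basis of open sets. -/
def vHatTopology : TopologicalSpace (V ⊕ VEnd G) :=
  .generateFrom ({U | ∃ A : Set V, A.Finite ∧ U = Sum.inl '' A} ∪
    {U | ∃ (S : Set V) (ω : VEnd G), S.Finite ∧ U = VHatBasic G S ω})

/-- The topology on the end space `Ω(G)`, with the sets `Ω(S, ω)` as a basis. -/
def endTopology : TopologicalSpace (VEnd G) :=
  .generateFrom {U | ∃ (S : Set V) (ω : VEnd G), S.Finite ∧ U = OmegaV G S ω}

/-- `C` is (the vertex set of) a connected component of the graph obtained from `G` by
deleting the vertex set `S`. -/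
def CompAvoiding (S : Set V) (C : Set V) : Prop :=
  ∃ v : V, v ∉ S ∧ C = {u | ReachAvoid G S v u}

/-- The ray `φ(r)` in the line graph of `G` induced by a ray `r` of `G`: its vertices are
the consecutive edges of `r`. -/
def phiRay {G : SimpleGraph V} (r : Ray G) : Ray G.lineGraph where
  f n := ⟨s(r.f n, r.f (n + 1)), G.mem_edgeSet.mpr (r.adj n)⟩
  inj a b h := by
    have h' : s(r.f a, r.f (a + 1)) = s(r.f b, r.f (b + 1)) := congrArg Subtype.val h
    rcases Sym2.eq_iff.mp h' with ⟨h1, _⟩ | ⟨h1, h2⟩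
    · exact r.inj h1
    · have e1 := r.inj h1
      have e2 := r.inj h2
      omega
  adj n := by
    refine SimpleGraph.lineGraph_adj_iff_exists.mpr ⟨?_, r.f (n + 1), ?_, ?_⟩
    · intro h
      have h' : s(r.f n, r.f (n + 1)) = s(r.f (n + 1), r.f (n + 2)) :=
        congrArg Subtype.val h
      rcases Sym2.eq_iff.mp h' with ⟨h1, _⟩ | ⟨h1, _⟩
      · have := r.inj h1; omega
      · have := r.inj h1; omega
    · exact Sym2.mem_iff.mpr (Or.inr rfl)
    · exact Sym2.mem_iff.mpr (Or.inl rfl)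

/-- The subset `T' ⊆ V̂(G')` induced by a subset `T ⊆ Ê(G)`:
`T' = Φ(T ∩ Ω_E(G)) ∪ ⋃_{v ∈ T ∩ V(G)} K_v`, where `K_v = δ({v})`. -/
def lineImage (Φ : EdgeEnd G → VEnd G.lineGraph) (T : Set (V ⊕ EdgeEnd G)) :
    Set (↥G.edgeSet ⊕ VEnd G.lineGraph) :=
  {x | (∃ ω : EdgeEnd G, Sum.inr ω ∈ T ∧ x = Sum.inr (Φ ω)) ∨
       (∃ (v : V) (e : G.edgeSet), Sum.inl v ∈ T ∧ v ∈ (e : Sym2 V) ∧ x = Sum.inl e)}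


section Aux

variable {V : Type u}

/-! ### Basic properties of `ReachAvoid` -/

lemma reachAvoid_symm {H : SimpleGraph V} {S : Set V} {u v : V}
    (h : ReachAvoid H S u v) : ReachAvoid H S v u := by
  obtain ⟨p, hp⟩ := h
  exact ⟨p.reverse, fun w hw => hp w (by
    rwa [SimpleGraph.Walk.support_reverse, List.mem_reverse] at hw)⟩

lemma reachAvoid_trans {H : SimpleGraph V} {S : Set V} {u v w : V}
    (h1 : ReachAvoid H S u v) (h2 : ReachAvoid H S v w) : ReachAvoid H S u w := by
  obtain ⟨p, hp⟩ := h1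
  obtain ⟨q, hq⟩ := h2
  refine ⟨p.append q, fun x hx => ?_⟩
  rcases (SimpleGraph.Walk.mem_support_append_iff p q).mp hx with h | h
  · exact hp x h
  · exact hq x h

/-! ### Walks along tails of rays -/

lemma ray_reachAvoid_le {H : SimpleGraph V} {S : Set V} (ρ : Ray H) (N : ℕ)
    (hN : ∀ k, N ≤ k → ρ.f k ∉ S) :
    ∀ d m, N ≤ m → ReachAvoid H S (ρ.f m) (ρ.f (m + d)) := by
  intro d
  induction d with
  | zero => exact fun m hm => ⟨SimpleGraph.Walk.nil, by
      intro w hw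
      simp only [SimpleGraph.Walk.support_nil, List.mem_singleton] at hw
      exact hw ▸ hN m hm⟩
  | succ d ih =>
      intro m hm
      refine reachAvoid_trans (ih m hm) ⟨(ρ.adj (m + d)).toWalk, ?_⟩
      intro w hw
      simp only [SimpleGraph.Adj.toWalk, SimpleGraph.Walk.support_cons,
        SimpleGraph.Walk.support_nil, List.mem_cons, List.mem_singleton,
        List.not_mem_nil, or_false] at hw
      rcases hw with rfl | rfl
      · exact hN _ (by omega)
      · exact hN _ (by omega)

lemma ray_reachAvoid {H : SimpleGraph V} {S : Set V} (ρ : Ray H) (N : ℕ)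
    (hN : ∀ k, N ≤ k → ρ.f k ∉ S) :
    ∀ m n, N ≤ m → N ≤ n → ReachAvoid H S (ρ.f m) (ρ.f n) := by
  intro m n hm hn
  rcases le_total m n with h | h
  · have := ray_reachAvoid_le ρ N hN (n - m) m hm
    rwa [Nat.add_sub_cancel' h] at this
  · have := ray_reachAvoid_le ρ N hN (m - n) n hn
    rw [Nat.add_sub_cancel' h] at this
    exact reachAvoid_symm this

/-! ### `VSameComp` and `VEquiv` -/

lemma vSameComp_refl {H : SimpleGraph V} {S : Set V} (hS : S.Finite) (ρ : Ray H) :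
    VSameComp H S ρ ρ := by
  have hfin : {k : ℕ | ρ.f k ∈ S}.Finite := Set.Finite.preimage ρ.inj.injOn hS
  obtain ⟨N, hNb⟩ := hfin.bddAbove
  refine ⟨N + 1, fun m n hm hn => ray_reachAvoid ρ (N + 1) ?_ m n hm hn⟩
  intro k hk hkS
  exact absurd (hNb hkS) (by omega)

lemma vSameComp_symm {H : SimpleGraph V} {S : Set V} {r s : Ray H}
    (h : VSameComp H S r s) : VSameComp H S s r := by
  obtain ⟨N, hN⟩ := h
  exact ⟨N, fun m n hm hn => reachAvoid_symm (hN n m hn hm)⟩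

lemma vSameComp_trans {H : SimpleGraph V} {S : Set V} {r s t : Ray H}
    (h1 : VSameComp H S r s) (h2 : VSameComp H S s t) : VSameComp H S r t := by
  obtain ⟨N1, hN1⟩ := h1
  obtain ⟨N2, hN2⟩ := h2
  refine ⟨max N1 N2, fun m n hm hn => ?_⟩
  exact reachAvoid_trans (hN1 m (max N1 N2) (le_trans (le_max_left _ _) hm) (le_max_left _ _))
    (hN2 (max N1 N2) n (le_max_right _ _) (le_trans (le_max_right _ _) hn))

lemma vEquiv_equivalence (H : SimpleGraph V) : Equivalence (VEquiv H) where
  refl ρ := fun _ hS => vSameComp_refl hS ρ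
  symm h := fun S hS => vSameComp_symm (h S hS)
  trans h1 h2 := fun S hS => vSameComp_trans (h1 S hS) (h2 S hS)

lemma vEquiv_of_vEnd_eq {H : SimpleGraph V} {r s : Ray H} (h : r.vEnd = s.vEnd) :
    VEquiv H r s :=
  ((vEquiv_equivalence H).eqvGen_iff).mp (Quot.eq.mp h)

/-! ### `SameComp` and `EdgeEquiv` -/

lemma ray_edge_inj {H : SimpleGraph V} (r : Ray H) :
    Function.Injective (fun k => s(r.f k, r.f (k + 1))) := by
  intro a b h
  simp only at h
  rcases Sym2.eq_iff.mp h with ⟨h1, _⟩ | ⟨h1, h2⟩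
  · exact r.inj h1
  · have e1 := r.inj h1
    have e2 := r.inj h2
    omega

lemma ray_reach_del_le {G : SimpleGraph V} {F : Set (Sym2 V)} (r : Ray G) (N : ℕ)
    (hN : ∀ k, N ≤ k → s(r.f k, r.f (k + 1)) ∉ F) :
    ∀ d m, N ≤ m → (G.deleteEdges F).Reachable (r.f m) (r.f (m + d)) := by
  intro d
  induction d with
  | zero => exact fun m _ => SimpleGraph.Reachable.refl _
  | succ d ih =>
      intro m hm
      refine (ih m hm).trans ?_
      exact SimpleGraph.Adj.reachable
        (SimpleGraph.deleteEdges_adj.mpr ⟨r.adj (m + d), hN _ (by omega)⟩)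

lemma sameComp_refl {G : SimpleGraph V} {F : Set (Sym2 V)} (hF : F.Finite) (r : Ray G) :
    SameComp G F r r := by
  have hfin : {k : ℕ | s(r.f k, r.f (k + 1)) ∈ F}.Finite :=
    Set.Finite.preimage (ray_edge_inj r).injOn hF
  obtain ⟨N, hNb⟩ := hfin.bddAbove
  have hN : ∀ k, N + 1 ≤ k → s(r.f k, r.f (k + 1)) ∉ F := by
    intro k hk hkF
    exact absurd (hNb hkF) (by omega)
  refine ⟨N + 1, fun m n hm hn => ?_⟩
  rcases le_total m n with h | h
  · have := ray_reach_del_le r (N + 1) hN (n - m) m hm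
    rwa [Nat.add_sub_cancel' h] at this
  · have := ray_reach_del_le r (N + 1) hN (m - n) n hn
    rw [Nat.add_sub_cancel' h] at this
    exact this.symm

lemma sameComp_symm {G : SimpleGraph V} {F : Set (Sym2 V)} {r s : Ray G}
    (h : SameComp G F r s) : SameComp G F s r := by
  obtain ⟨N, hN⟩ := h
  exact ⟨N, fun m n hm hn => (hN n m hn hm).symm⟩

lemma sameComp_trans {G : SimpleGraph V} {F : Set (Sym2 V)} {r s t : Ray G}
    (h1 : SameComp G F r s) (h2 : SameComp G F s t) : SameComp G F r t := by
  obtain ⟨N1, hN1⟩ := h1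
  obtain ⟨N2, hN2⟩ := h2
  refine ⟨max N1 N2, fun m n hm hn => ?_⟩
  exact (hN1 m (max N1 N2) (le_trans (le_max_left _ _) hm) (le_max_left _ _)).trans
    (hN2 (max N1 N2) n (le_max_right _ _) (le_trans (le_max_right _ _) hn))

lemma edgeEquiv_equivalence (G : SimpleGraph V) : Equivalence (EdgeEquiv G) where
  refl r := fun _ hF => sameComp_refl hF r
  symm h := fun F hF => sameComp_symm (h F hF)
  trans h1 h2 := fun F hF => sameComp_trans (h1 F hF) (h2 F hF)

lemma edgeEquiv_of_edgeEnd_eq {G : SimpleGraph V} {r s : Ray G} (h : r.edgeEnd = s.edgeEnd) :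
    EdgeEquiv G r s :=
  ((edgeEquiv_equivalence G).eqvGen_iff).mp (Quot.eq.mp h)

lemma sameComp_mono {G : SimpleGraph V} {F1 F2 : Set (Sym2 V)} (hF : F1 ⊆ F2) {r s : Ray G}
    (h : SameComp G F2 r s) : SameComp G F1 r s := by
  obtain ⟨N, hN⟩ := h
  exact ⟨N, fun m n hm hn => (hN m n hm hn).mono (SimpleGraph.deleteEdges_anti hF)⟩

/-! ### Monotonicity and refinement of the basic sets -/

lemma cE_mono {G : SimpleGraph V} {F1 F2 : Set (Sym2 V)} (hF : F1 ⊆ F2) (ω : EdgeEnd G) :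
    CE G F2 ω ⊆ CE G F1 ω := by
  rintro v ⟨r, hr, N, hN⟩
  exact ⟨r, hr, N, fun n hn => (hN n hn).mono (SimpleGraph.deleteEdges_anti hF)⟩

lemma omegaE_mono {G : SimpleGraph V} {F1 F2 : Set (Sym2 V)} (hF : F1 ⊆ F2) (ω : EdgeEnd G) :
    OmegaE G F2 ω ⊆ OmegaE G F1 ω := by
  rintro η ⟨r, s, hr, hs, hrs⟩
  exact ⟨r, s, hr, hs, sameComp_mono hF hrs⟩

lemma eHatBasic_mono {G : SimpleGraph V} {F1 F2 : Set (Sym2 V)} (hF : F1 ⊆ F2) (ω : EdgeEnd G) :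
    EHatBasic G F2 ω ⊆ EHatBasic G F1 ω :=
  Set.union_subset_union (Set.image_mono (cE_mono hF ω))
    (Set.image_mono (omegaE_mono hF ω))

lemma mem_omegaE_self {G : SimpleGraph V} {F : Set (Sym2 V)} (hF : F.Finite) (ω : EdgeEnd G) :
    ω ∈ OmegaE G F ω := by
  obtain ⟨r, hr⟩ := Quot.exists_rep ω
  exact ⟨r, r, hr, hr, sameComp_refl hF r⟩

lemma omegaE_refine {G : SimpleGraph V} {F : Set (Sym2 V)} (hF : F.Finite)
    {ω ω' : EdgeEnd G} (h : ω ∈ OmegaE G F ω') : OmegaE G F ω ⊆ OmegaE G F ω' := by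
  obtain ⟨r, s, hr, hs, hrs⟩ := h
  rintro η ⟨r', s', hr', hs', hr's'⟩
  have hsr' : SameComp G F s r' := edgeEquiv_of_edgeEnd_eq (hs.trans hr'.symm) F hF
  exact ⟨r, s', hr, hs', sameComp_trans (sameComp_trans hrs hsr') hr's'⟩

lemma cE_refine {G : SimpleGraph V} {F : Set (Sym2 V)} (hF : F.Finite)
    {ω ω' : EdgeEnd G} (h : ω ∈ OmegaE G F ω') : CE G F ω ⊆ CE G F ω' := by
  obtain ⟨r, s, hr, hs, hrs⟩ := h
  rintro v ⟨r', hr', N, hN⟩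
  have hsr' : SameComp G F s r' := edgeEquiv_of_edgeEnd_eq (hs.trans hr'.symm) F hF
  obtain ⟨N', hN'⟩ := sameComp_trans hrs hsr'
  refine ⟨r, hr, max N N', fun n hn => ?_⟩
  exact (hN' n (max N N') (le_trans (le_max_right _ _) hn) (le_max_right _ _)).trans
    (hN (max N N') (le_max_left _ _))

lemma eHatBasic_refine {G : SimpleGraph V} {F : Set (Sym2 V)} (hF : F.Finite)
    {ω ω' : EdgeEnd G} (h : ω ∈ OmegaE G F ω') : EHatBasic G F ω ⊆ EHatBasic G F ω' :=
  Set.union_subset_union (Set.image_mono (cE_refine hF h))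
    (Set.image_mono (omegaE_refine hF h))

/-! ### Extracting a basic neighbourhood from an open set -/

lemma exists_basic (G : SimpleGraph V) {U : Set (V ⊕ EdgeEnd G)}
    (hU : @IsOpen _ (eHatTopology G) U) {ω : EdgeEnd G} (hω : Sum.inr ω ∈ U) :
    ∃ F : Set (Sym2 V), F.Finite ∧ F ⊆ G.edgeSet ∧ EHatBasic G F ω ⊆ U := by
  have hU' : TopologicalSpace.GenerateOpen ({U | ∃ v : V, U = {Sum.inl v}} ∪
    {U | ∃ (F : Set (Sym2 V)) (ω : EdgeEnd G),
      F.Finite ∧ F ⊆ G.edgeSet ∧ U = EHatBasic G F ω}) U := hU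
  clear hU
  induction hU' with
  | basic U hUb =>
      rcases hUb with ⟨v, rfl⟩ | ⟨F, ω', hF, hFs, rfl⟩
      · simp at hω
      · have hωm : ω ∈ OmegaE G F ω' := by
          rcases hω with ⟨v, _, hv⟩ | ⟨η, hη, hη2⟩
          · exact absurd hv (by simp)
          · exact Sum.inr_injective hη2 ▸ hη
        exact ⟨F, hF, hFs, eHatBasic_refine hF hωm⟩
  | univ => exact ⟨∅, Set.finite_empty, Set.empty_subset _, Set.subset_univ _⟩
  | inter U1 U2 _ _ ih1 ih2 =>
      obtain ⟨F1, hF1, hF1s, hF1U⟩ := ih1 hω.1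
      obtain ⟨F2, hF2, hF2s, hF2U⟩ := ih2 hω.2
      refine ⟨F1 ∪ F2, hF1.union hF2, Set.union_subset hF1s hF2s, fun x hx => ?_⟩
      exact ⟨hF1U (eHatBasic_mono Set.subset_union_left ω hx),
        hF2U (eHatBasic_mono Set.subset_union_right ω hx)⟩
  | sUnion S _ ih =>
      obtain ⟨U0, hU0S, hωU0⟩ := hω
      obtain ⟨F, hF, hFs, hFU⟩ := ih U0 hU0S hωU0
      exact ⟨F, hF, hFs, hFU.trans (Set.subset_sUnion_of_mem hU0S)⟩

/-! ### Translating walks in the line graph to reachability in `G - F` -/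

lemma reach_of_edge {G : SimpleGraph V} {F : Set (Sym2 V)} {e : Sym2 V}
    (he : e ∈ G.edgeSet) (heF : e ∉ F) {u w : V} (hu : u ∈ e) (hw : w ∈ e) :
    (G.deleteEdges F).Reachable u w := by
  by_cases huw : u = w
  · exact huw ▸ SimpleGraph.Reachable.refl u
  · have hes : e = s(u, w) := (Sym2.mem_and_mem_iff huw).mp ⟨hu, hw⟩
    subst hes
    exact SimpleGraph.Adj.reachable
      (SimpleGraph.deleteEdges_adj.mpr ⟨G.mem_edgeSet.mp he, heF⟩)

lemma reach_of_lineWalk {G : SimpleGraph V} {F : Set (Sym2 V)} {a b : G.edgeSet}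
    (p : G.lineGraph.Walk a b) :
    (∀ w ∈ p.support, (w : Sym2 V) ∉ F) →
    ∀ {u w : V}, u ∈ (a : Sym2 V) → w ∈ (b : Sym2 V) →
      (G.deleteEdges F).Reachable u w := by
  induction p with
  | @nil a =>
      intro hp u w hu hw
      exact reach_of_edge a.2 (hp a (by simp)) hu hw
  | @cons a c b hadj p ih =>
      intro hp u w hu hw
      obtain ⟨-, x, hxa, hxc⟩ := SimpleGraph.lineGraph_adj_iff_exists.mp hadj
      have h1 : (G.deleteEdges F).Reachable u x :=
        reach_of_edge a.2 (hp a (by simp)) hu hxa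
      refine h1.trans (ih ?_ hxc hw)
      intro y hy
      exact hp y (by simp [SimpleGraph.Walk.support_cons, hy])

end Aux

/-- If `T ⊆ Ê(G)` is a discrete subspace, then
`T' = Φ(T ∩ Ω_E(G)) ∪ ⋃_{v ∈ T ∩ V(G)} K_v` is a discrete subspace of `V̂(G')`. -/
theorem lineImage_discrete (T : Set (V ⊕ EdgeEnd G))
    (hT : ∀ t ∈ T, ∃ U : Set (V ⊕ EdgeEnd G), @IsOpen _ (eHatTopology G) U ∧ U ∩ T = {t})
    (Φ : EdgeEnd G → VEnd G.lineGraph)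
    (hΦ : ∀ r : Ray G, Φ r.edgeEnd = (phiRay r).vEnd) :
    ∀ t' ∈ lineImage G Φ T,
      ∃ U : Set (↥G.edgeSet ⊕ VEnd G.lineGraph),
        @IsOpen _ (vHatTopology G.lineGraph) U ∧ U ∩ lineImage G Φ T = {t'} := by
  intro t' ht'
  rcases ht' with ⟨ω, hωT, rfl⟩ | ⟨v, e, hvT, hve, rfl⟩
  · -- end case
    obtain ⟨U, hUopen, hUT⟩ := hT _ hωT
    have hωU : Sum.inr ω ∈ U := by
      have : Sum.inr ω ∈ U ∩ T := hUT ▸ rfl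
      exact this.1
    obtain ⟨F, hFfin, hFsub, hFU⟩ := exists_basic G hUopen hωU
    obtain ⟨r, hr⟩ := Quot.exists_rep ω
    have hrω : r.edgeEnd = ω := hr
    set S : Set G.edgeSet := Subtype.val ⁻¹' F with hS
    have hSfin : S.Finite := hFfin.preimage Subtype.coe_injective.injOn
    have hΦω : (phiRay r).vEnd = Φ ω := by rw [← hrω, hΦ r]
    refine ⟨VHatBasic G.lineGraph S (Φ ω), ?_, ?_⟩
    · exact TopologicalSpace.GenerateOpen.basic _ (Or.inr ⟨S, Φ ω, hSfin, rfl⟩)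
    · apply Set.eq_singleton_iff_unique_mem.mpr
      constructor
      · exact ⟨Set.mem_union_right _
          ⟨Φ ω, ⟨phiRay r, phiRay r, hΦω, hΦω, vSameComp_refl hSfin _⟩, rfl⟩,
          Or.inl ⟨ω, hωT, rfl⟩⟩
      · rintro x ⟨hxV, hxL⟩
        rcases hxL with ⟨η, hηT, rfl⟩ | ⟨v', e', hv'T, hv'e, rfl⟩
        · -- x = inr (Φ η)
          have hη : Φ η ∈ OmegaV G.lineGraph S (Φ ω) := by
            rcases hxV with ⟨y, _, hy⟩ | ⟨y, hy, hy2⟩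
            · exact absurd hy (by simp)
            · exact Sum.inr_injective hy2 ▸ hy
          obtain ⟨ρ, σ, hρ, hσ, hρσ⟩ := hη
          obtain ⟨s, hs⟩ := Quot.exists_rep η
          have hsη : s.edgeEnd = η := hs
          have hΦη : (phiRay s).vEnd = Φ η := by rw [← hsη, hΦ s]
          have h1 : VSameComp G.lineGraph S (phiRay r) ρ :=
            vEquiv_of_vEnd_eq (hΦω.trans hρ.symm) S hSfin
          have h2 : VSameComp G.lineGraph S σ (phiRay s) :=
            vEquiv_of_vEnd_eq (hσ.trans hΦη.symm) S hSfin
          obtain ⟨N, hN⟩ := vSameComp_trans (vSameComp_trans h1 hρσ) h2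
          have hrs : SameComp G F r s := by
            refine ⟨N, fun m n hm hn => ?_⟩
            obtain ⟨p, hp⟩ := hN m n hm hn
            exact reach_of_lineWalk p (fun w hw => hp w hw)
              (Sym2.mem_iff.mpr (Or.inl rfl)) (Sym2.mem_iff.mpr (Or.inl rfl))
          have hmem : Sum.inr η ∈ U ∩ T :=
            ⟨hFU (Or.inr ⟨η, ⟨r, s, hrω, hsη, hrs⟩, rfl⟩), hηT⟩
          rw [hUT] at hmem
          have hηω : η = ω := Sum.inr_injective (Set.mem_singleton_iff.mp hmem)
          rw [hηω]
        · -- x = inl e', impossible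
          exfalso
          have he' : e' ∈ CV G.lineGraph S (Φ ω) := by
            rcases hxV with ⟨y, hy, hy2⟩ | ⟨y, _, hy⟩
            · exact Sum.inl_injective hy2 ▸ hy
            · exact absurd hy (by simp)
          obtain ⟨ρ, hρ, N, hN⟩ := he'
          have h1 : VSameComp G.lineGraph S (phiRay r) ρ :=
            vEquiv_of_vEnd_eq (hΦω.trans hρ.symm) S hSfin
          obtain ⟨N1, hN1⟩ := h1
          have hv' : v' ∈ CE G F ω := by
            refine ⟨r, hrω, max N N1, fun n hn => ?_⟩
            have hra : ReachAvoid G.lineGraph S ((phiRay r).f n) e' :=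
              reachAvoid_trans
                (hN1 n (max N N1) (le_trans (le_max_right _ _) hn) (le_max_right _ _))
                (hN (max N N1) (le_max_left _ _))
            obtain ⟨p, hp⟩ := hra
            exact reach_of_lineWalk p (fun w hw => hp w hw)
              (Sym2.mem_iff.mpr (Or.inl rfl)) hv'e
          have hmem : Sum.inl v' ∈ U ∩ T := ⟨hFU (Or.inl ⟨v', hv', rfl⟩), hv'T⟩
          rw [hUT] at hmem
          exact Sum.inl_ne_inr (Set.mem_singleton_iff.mp hmem)
  · -- vertex case: a singleton is open
    refine ⟨{Sum.inl e}, ?_, ?_⟩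
    · exact TopologicalSpace.GenerateOpen.basic _
        (Or.inl ⟨{e}, Set.finite_singleton e, by simp⟩)
    · apply Set.eq_singleton_iff_unique_mem.mpr
      exact ⟨⟨rfl, Or.inr ⟨v, e, hvT, hve, rfl⟩⟩, fun x hx => hx.1⟩

end EdgeEndPaper
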